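/- arXiv:2302.10841 — 4 statements merged into one kernel-verified Lean document; each statement's English description precedes it below -/
import Mathlib

section
/- Let d be a nonnegative integer, let h ≥ d be real, and let β>0. Let N be a finite set of size d and define f: subsets of N → [0,1] by f(S) = exp(β(2|S|−d+h)) / (exp(β(2|S|−d+h)) + exp(−β(2|S|−d+h))) = (1/2)(1 + tanh(β(2|S|−d+h))). Then f is submodular: for all S,T ⊆ N, f(S)+f(T) ≥ f(S∪T)+f(S∩T). -/
open Real Finset

noncomputable section

private lemma phi_eq (x : ℝ) :
    exp x / (exp x + exp (-x)) = exp (2*x) / (exp (2*x) + 1) := by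
  rw [div_eq_div_iff (by positivity) (by positivity)]
  have h1 : exp (2*x) = exp x * exp x := by rw [← exp_add]; ring_nf
  have h2 : exp x * exp (-x) = 1 := by rw [← exp_add]; simp
  have h3 : exp (2*x) * exp (-x) = exp x := by rw [← exp_add]; ring_nf
  nlinarith [h1, h2, h3]

private lemma key_poly (P Q s : ℝ) (hP : 1 ≤ P) (hPQ : P ≤ Q) (hs : 1 ≤ s) :
    Q*s/(Q*s+1) + P/(P+1) ≤ P*s/(P*s+1) + Q/(Q+1) := by
  have hP0 : (0:ℝ) < P + 1 := by nlinarith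
  have hQ0 : (0:ℝ) < Q + 1 := by nlinarith
  have hPs : (0:ℝ) < P*s + 1 := by nlinarith
  have hQs : (0:ℝ) < Q*s + 1 := by nlinarith
  rw [div_add_div _ _ (ne_of_gt hQs) (ne_of_gt hP0),
      div_add_div _ _ (ne_of_gt hPs) (ne_of_gt hQ0),
      div_le_div_iff₀ (by positivity) (by positivity)]
  have hPQs : (0:ℝ) ≤ P*Q*s - 1 := by nlinarith
  nlinarith [mul_nonneg (mul_nonneg (sub_nonneg.2 hPQ) (sub_nonneg.2 hs)) hPQs]

private lemma key (p q t : ℝ) (hp : 0 ≤ p) (hpq : p ≤ q) (ht : 0 ≤ t) :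
    exp (q+t) / (exp (q+t) + exp (-(q+t))) + exp p / (exp p + exp (-p)) ≤
    exp (p+t) / (exp (p+t) + exp (-(p+t))) + exp q / (exp q + exp (-q)) := by
  rw [phi_eq, phi_eq, phi_eq, phi_eq]
  have e1 : exp (2*(q+t)) = exp (2*q) * exp (2*t) := by rw [← exp_add]; ring_nf
  have e2 : exp (2*(p+t)) = exp (2*p) * exp (2*t) := by rw [← exp_add]; ring_nf
  rw [e1, e2]
  exact key_poly _ _ _ (one_le_exp (by linarith)) (exp_le_exp.2 (by linarith))
    (one_le_exp (by linarith))

/-- The Glauber local update probability of a vertex of degree `d` with external field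
`h ≥ d` is a submodular function of the set `S` of `+1`-neighbors. -/
theorem local_update_submodular (d : ℕ) (h β : ℝ) (hh : (d : ℝ) ≤ h) (hβ : 0 < β)
    {N : Type*} [Fintype N] [DecidableEq N] (hN : Fintype.card N = d)
    (f : Finset N → ℝ)
    (hf : ∀ S : Finset N,
      f S = exp (β * (2 * (S.card : ℝ) - d + h)) /
        (exp (β * (2 * (S.card : ℝ) - d + h)) + exp (-(β * (2 * (S.card : ℝ) - d + h)))))
    (S T : Finset N) :
    f (S ∪ T) + f (S ∩ T) ≤ f S + f T := by
  rw [hf, hf, hf, hf]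
  set i : ℝ := ((S ∩ T).card : ℝ) with hi
  set u : ℝ := ((S ∪ T).card : ℝ) with hu
  set a : ℝ := (S.card : ℝ) with ha
  set b : ℝ := (T.card : ℝ) with hb
  have hcard : u + i = a + b := by
    rw [hu, hi, ha, hb]
    exact_mod_cast Finset.card_union_add_card_inter S T
  have hia : i ≤ a := by
    rw [hi, ha]; exact_mod_cast Finset.card_le_card (Finset.inter_subset_left : S ∩ T ⊆ S)
  have hib : i ≤ b := by
    rw [hi, hb]; exact_mod_cast Finset.card_le_card (Finset.inter_subset_right : S ∩ T ⊆ T)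
  have hi0 : 0 ≤ i := by positivity
  -- apply key with p = β*(2i - d + h), q = β*(2b - d + h), t = 2β(a - i)
  have := key (β * (2 * i - d + h)) (β * (2 * b - d + h)) (2 * β * (a - i))
    (by nlinarith) (by nlinarith) (by nlinarith)
  have eq1 : β * (2 * b - d + h) + 2 * β * (a - i) = β * (2 * u - d + h) := by
    nlinarith [hcard]
  have eq2 : β * (2 * i - d + h) + 2 * β * (a - i) = β * (2 * a - d + h) := by ring
  rw [eq1, eq2] at this
  linarith
end
end

section
/- Let x, y, u, v be real numbers with x+y = u+v, x+y ≥ 0, and |x−y| ≤ |u−v|. Then tanh(x) + tanh(y) ≥ tanh(u) + tanh(v). -/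
open Real

lemma tanh_add_tanh (a b : ℝ) :
    Real.tanh a + Real.tanh b = Real.sinh (a + b) / (Real.cosh a * Real.cosh b) := by
  rw [Real.tanh_eq_sinh_div_cosh, Real.tanh_eq_sinh_div_cosh, Real.sinh_add]
  field_simp [(Real.cosh_pos a).ne', (Real.cosh_pos b).ne']

lemma cosh_mul_cosh (a b : ℝ) :
    Real.cosh a * Real.cosh b = (Real.cosh (a + b) + Real.cosh (a - b)) / 2 := by
  rw [Real.cosh_add, Real.cosh_sub]; ring

/-- If `x + y = u + v`, `x + y ≥ 0`, and `|x − y| ≤ |u − v|`, then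
`tanh x + tanh y ≥ tanh u + tanh v`. -/
theorem tanh_sum_ge (x y u v : ℝ) (hsum : x + y = u + v) (hpos : 0 ≤ x + y)
    (hspread : |x - y| ≤ |u - v|) :
    Real.tanh u + Real.tanh v ≤ Real.tanh x + Real.tanh y := by
  rw [tanh_add_tanh, tanh_add_tanh, ← hsum]
  apply div_le_div_of_nonneg_left
  · exact Real.sinh_nonneg_iff.mpr hpos
  · exact mul_pos (Real.cosh_pos x) (Real.cosh_pos y)
  · rw [cosh_mul_cosh, cosh_mul_cosh, hsum]
    gcongr
    exact Real.cosh_le_cosh.mpr hspread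
end

section
/- For all real β ≥ 0, all real k ≥ 0, and every real s, tanh(β(s+k)) − tanh(β(s−k)) ≤ 2·tanh(kβ). -/
open Real

/-- For `β ≥ 0`, `k ≥ 0`, and any real `s`:
`tanh(β(s+k)) − tanh(β(s−k)) ≤ 2·tanh(kβ)`. -/
theorem tanh_diff_le (β k s : ℝ) (hβ : 0 ≤ β) (hk : 0 ≤ k) :
    Real.tanh (β * (s + k)) - Real.tanh (β * (s - k)) ≤ 2 * Real.tanh (k * β) := by
  set a := β * (s + k) with ha
  set b := β * (s - k) with hb
  set d := k * β with hdd
  have hd : a - b = 2 * d := by rw [ha, hb, hdd]; ring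
  have hca := Real.cosh_pos a
  have hcb := Real.cosh_pos b
  have hcd := Real.cosh_pos d
  have key : Real.cosh d ^ 2 ≤ Real.cosh a * Real.cosh b := by
    have h1 : Real.cosh (a + b) + Real.cosh (a - b)
        = 2 * (Real.cosh a * Real.cosh b) := by
      rw [Real.cosh_add, Real.cosh_sub]; ring
    have h2 : Real.cosh (a - b) = 2 * Real.cosh d ^ 2 - 1 := by
      rw [hd, Real.cosh_two_mul]
      nlinarith [Real.cosh_sq_sub_sinh_sq d]
    nlinarith [Real.one_le_cosh (a + b)]
  have hsnn : 0 ≤ Real.sinh d := Real.sinh_nonneg_iff.mpr (mul_nonneg hk hβ)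
  have hs : Real.sinh (a - b) = 2 * Real.sinh d * Real.cosh d := by
    rw [hd, Real.sinh_two_mul]
  have hsabnn : 0 ≤ Real.sinh (a - b) := by
    rw [hs]; positivity
  have hdiff : Real.tanh a - Real.tanh b
      = Real.sinh (a - b) / (Real.cosh a * Real.cosh b) := by
    rw [Real.tanh_eq_sinh_div_cosh, Real.tanh_eq_sinh_div_cosh, Real.sinh_sub]
    field_simp
  rw [hdiff, Real.tanh_eq_sinh_div_cosh]
  calc Real.sinh (a - b) / (Real.cosh a * Real.cosh b)
      ≤ Real.sinh (a - b) / (Real.cosh d ^ 2) := by gcongr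
    _ = 2 * (Real.sinh d / Real.cosh d) := by
        rw [hs]; field_simp
end

section
/- Let G=(V,E) be a finite graph, β>0, and let the external field h be at least the maximum degree of G. Fix any initial configuration σ₀∈{−1,+1}^V. For S⊆V let X̃_t^S denote the S-corrupted Glauber dynamics with external field h, where S is pinned to +1 and the initial configuration is σ₀ with the spins on S set to +1. Then for every time t, the function S ↦ E[|{v∈V : X̃_t^S(v)=+1}|] is submodular: for all S,T⊆V it is at least as large summed over S and T as summed over S∪T and S∩T. -/
open Real Finset
open scoped Classical

noncomputable section

variable {V : Type*} [Fintype V] [DecidableEq V]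

/-- The real value of a spin: `true ↦ +1`, `false ↦ -1`. -/
def spinVal (b : Bool) : ℝ := if b then 1 else -1

/-- Sum of the spins of the neighbors of `v`. -/
def nbrSum (G : SimpleGraph V) (σ : V → Bool) (v : V) : ℝ :=
  ∑ u : V, if G.Adj v u then spinVal (σ u) else 0

/-- Glauber probability of updating `v` to `+1` in the presence of an external field `h`. -/
def glauberPField (β h : ℝ) (G : SimpleGraph V) (σ : V → Bool) (v : V) : ℝ :=
  exp (β * (nbrSum G σ v + h)) /
    (exp (β * (nbrSum G σ v + h)) + exp (-(β * (nbrSum G σ v + h))))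

/-- One-step kernel of the `S`-corrupted Glauber dynamics with external field `h`
and `S` pinned to `+1`. -/
def pinnedKField (G : SimpleGraph V) (β h : ℝ) (S : Finset V)
    (σ σ' : V → Bool) : ℝ :=
  (Fintype.card V : ℝ)⁻¹ * ∑ v : V,
    if v ∈ S then (if σ' = Function.update σ v true then 1 else 0)
    else (if σ' = Function.update σ v true then glauberPField β h G σ v else 0)
       + (if σ' = Function.update σ v false then 1 - glauberPField β h G σ v else 0)

/-- Evolution of a distribution under `t` steps of a Markov kernel. -/
def evolve (K : (V → Bool) → (V → Bool) → ℝ) : ℕ → ((V → Bool) → ℝ) → ((V → Bool) → ℝ)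
  | 0, ν => ν
  | t+1, ν => fun σ' => ∑ σ : V → Bool, evolve K t ν σ * K σ σ'

/-- Point mass at `σ₀`. -/
def delta (σ₀ : V → Bool) : (V → Bool) → ℝ := fun σ => if σ = σ₀ then 1 else 0

/-- Expected number of `+1` spins under the distribution `ν`. -/
def expPlus (ν : (V → Bool) → ℝ) : ℝ :=
  ∑ σ : V → Bool, ν σ * ((univ.filter (fun v => σ v = true)).card : ℝ)

/-- The initial configuration `σ₀` with the spins on `S` set to `+1`. -/
def pinInit (S : Finset V) (σ₀ : V → Bool) : V → Bool :=
  fun v => if v ∈ S then true else σ₀ v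

namespace DS


def sigm (β h x : ℝ) : ℝ := (1 + Real.exp (-(2*β*(x+h))))⁻¹

lemma glauberPField_eq_sigm (β h : ℝ) (G : SimpleGraph V) (σ : V → Bool) (v : V) :
    glauberPField β h G σ v = sigm β h (nbrSum G σ v) := by
  unfold glauberPField sigm
  set a := β * (nbrSum G σ v + h) with ha
  have h1 : exp a + exp (-a) = exp a * (1 + exp (-(2*β*(nbrSum G σ v + h)))) := by
    rw [mul_add, mul_one, ← Real.exp_add]
    congr 2
    ring
  rw [h1, eq_comm, inv_eq_iff_eq_inv, eq_comm, inv_eq_one_div, div_eq_iff (by positivity)]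
  field_simp

lemma sigm_pos (β h x : ℝ) : 0 < sigm β h x := by unfold sigm; positivity

lemma sigm_le_one (β h x : ℝ) : sigm β h x ≤ 1 := by
  unfold sigm
  rw [inv_le_one_iff₀]
  right
  nlinarith [Real.exp_pos (-(2*β*(x+h)))]

lemma sigm_mono (β h : ℝ) (hβ : 0 < β) {x y : ℝ} (hxy : x ≤ y) :
    sigm β h x ≤ sigm β h y := by
  unfold sigm
  have : exp (-(2*β*(y+h))) ≤ exp (-(2*β*(x+h))) := by
    apply Real.exp_le_exp.2; nlinarith
  apply inv_anti₀ (by positivity) (by linarith)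

lemma sigm_key (β h : ℝ) (hβ : 0 < β) (xa xb xc xd : ℝ) (hd : -h ≤ xd)
    (hda : xd ≤ xa) (hdb : xd ≤ xb) (hsum : xc + xd ≤ xa + xb) :
    sigm β h xc + sigm β h xd ≤ sigm β h xa + sigm β h xb := by
  have h1 : sigm β h xc ≤ sigm β h (xa + xb - xd) := sigm_mono β h hβ (by linarith)
  have main : sigm β h (xa + xb - xd) + sigm β h xd ≤ sigm β h xa + sigm β h xb := by
    set a := exp (-(2*β*(xa+h))) with hA
    set b := exp (-(2*β*(xb+h))) with hB
    set d := exp (-(2*β*(xd+h))) with hD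
    have hd0 : 0 < d := Real.exp_pos _
    have ha0 : 0 < a := Real.exp_pos _
    have hb0 : 0 < b := Real.exp_pos _
    have had : a ≤ d := by apply Real.exp_le_exp.2; nlinarith
    have hbd : b ≤ d := by apply Real.exp_le_exp.2; nlinarith
    have hd1 : d ≤ 1 := by rw [hD, Real.exp_le_one_iff]; nlinarith
    have key : exp (-(2*β*((xa+xb-xd)+h))) = a * b / d := by
      rw [eq_div_iff (ne_of_gt hd0), hA, hB, hD, ← Real.exp_add, ← Real.exp_add]
      congr 1
      ring
    unfold sigm
    rw [key]
    have e1 : (1 + a*b/d)⁻¹ = d/(d+a*b) := by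
      rw [show (1 : ℝ) + a*b/d = (d+a*b)/d by field_simp, inv_div]
    rw [e1]
    have h2 : 0 < d + a*b := by nlinarith
    have h3 : 0 < 1 + d := by nlinarith
    have h4 : 0 < 1 + a := by nlinarith
    have h5 : 0 < 1 + b := by nlinarith
    rw [inv_eq_one_div, inv_eq_one_div, inv_eq_one_div,
      div_add_div _ _ (ne_of_gt h2) (ne_of_gt h3), div_add_div _ _ (ne_of_gt h4) (ne_of_gt h5),
      div_le_div_iff₀ (by positivity) (by positivity)]
    ring_nf
    nlinarith [mul_nonneg (mul_nonneg (sub_nonneg.2 had) (sub_nonneg.2 hbd)) (sub_nonneg.2 hd1),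
      mul_pos ha0 hb0, mul_nonneg (sub_nonneg.2 had) (sub_nonneg.2 hbd),
      mul_nonneg (mul_nonneg ha0.le hb0.le) (sub_nonneg.2 hd1),
      mul_nonneg (sub_nonneg.2 had) hb0.le, mul_nonneg (sub_nonneg.2 hbd) ha0.le]
  linarith

lemma neg_deg_le_nbrSum (G : SimpleGraph V) (σ : V → Bool) (v : V) :
    -(G.degree v : ℝ) ≤ nbrSum G σ v := by
  have h1 : (∑ u : V, if G.Adj v u then (-1:ℝ) else 0) = -(G.degree v : ℝ) := by
    rw [Finset.sum_ite, Finset.sum_const, Finset.sum_const]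
    simp [SimpleGraph.degree, SimpleGraph.neighborFinset_eq_filter]
  rw [← h1]
  apply Finset.sum_le_sum
  intro u _
  by_cases hadj : G.Adj v u <;> simp [hadj, spinVal] <;> cases σ u <;> norm_num

lemma nbrSum_mono (G : SimpleGraph V) {σ σ' : V → Bool}
    (hle : ∀ u, σ u = true → σ' u = true) (v : V) :
    nbrSum G σ v ≤ nbrSum G σ' v := by
  apply Finset.sum_le_sum
  intro u _
  by_cases hadj : G.Adj v u <;> simp [hadj, spinVal]
  cases hu : σ u
  · cases σ' u <;> norm_num
  · rw [hle u hu]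


abbrev Quad (V : Type*) := (V → Bool) × (V → Bool) × (V → Bool) × (V → Bool)

def Inv (x : Quad V) : Prop :=
  ∀ v, (x.2.2.2 v = true → x.1 v = true ∧ x.2.1 v = true) ∧
       (x.2.2.1 v = true → x.1 v = true ∨ x.2.1 v = true)

variable (G : SimpleGraph V) (β h : ℝ) (S T : Finset V)

def pp (U : Finset V) (σ : V → Bool) (v : V) : ℝ :=
  if v ∈ U then 1 else glauberPField β h G σ v

lemma pp_pos (U : Finset V) (σ : V → Bool) (v : V) : 0 < pp G β h U σ v := by
  unfold pp
  split
  · norm_num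
  · rw [glauberPField_eq_sigm]; exact sigm_pos β h _

lemma pp_le_one (U : Finset V) (σ : V → Bool) (v : V) : pp G β h U σ v ≤ 1 := by
  unfold pp
  split
  · exact le_refl 1
  · rw [glauberPField_eq_sigm]; exact sigm_le_one β h _

def pA (x : Quad V) (v : V) : ℝ := pp G β h S x.1 v
def pB (x : Quad V) (v : V) : ℝ := pp G β h T x.2.1 v
def pC (x : Quad V) (v : V) : ℝ := pp G β h (S ∪ T) x.2.2.1 v
def pD (x : Quad V) (v : V) : ℝ := pp G β h (S ∩ T) x.2.2.2 v

lemma p_ineqs (hβ : 0 < β) (hh : ∀ v : V, (G.degree v : ℝ) ≤ h)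
    (x : Quad V) (hx : Inv x) (v : V) :
    pD G β h S T x v ≤ pA G β h S x v ∧ pD G β h S T x v ≤ pB G β h T x v ∧
      pC G β h S T x v + pD G β h S T x v ≤ pA G β h S x v + pB G β h T x v := by
  have hda : ∀ u, x.2.2.2 u = true → x.1 u = true := fun u hu => ((hx u).1 hu).1
  have hdb : ∀ u, x.2.2.2 u = true → x.2.1 u = true := fun u hu => ((hx u).1 hu).2
  have hmono_a : nbrSum G x.2.2.2 v ≤ nbrSum G x.1 v := nbrSum_mono G hda v
  have hmono_b : nbrSum G x.2.2.2 v ≤ nbrSum G x.2.1 v := nbrSum_mono G hdb v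
  have hterm : ∀ u, spinVal (x.2.2.1 u) + spinVal (x.2.2.2 u)
      ≤ spinVal (x.1 u) + spinVal (x.2.1 u) := by
    intro u
    rcases hx u with ⟨h1, h2⟩
    cases ha : x.1 u <;> cases hb : x.2.1 u <;> cases hc : x.2.2.1 u <;>
      cases hd : x.2.2.2 u <;> simp_all [spinVal] <;> norm_num
  have hsum : nbrSum G x.2.2.1 v + nbrSum G x.2.2.2 v
      ≤ nbrSum G x.1 v + nbrSum G x.2.1 v := by
    unfold nbrSum
    rw [← Finset.sum_add_distrib, ← Finset.sum_add_distrib]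
    apply Finset.sum_le_sum
    intro u _
    by_cases hadj : G.Adj v u
    · simp only [hadj, if_true]; exact hterm u
    · simp [hadj]
  have hfield : -h ≤ nbrSum G x.2.2.2 v := by
    have h1 := neg_deg_le_nbrSum G x.2.2.2 v
    have h2 := hh v
    linarith
  unfold pA pB pC pD pp
  by_cases hS : v ∈ S <;> by_cases hT : v ∈ T
  · simp only [Finset.mem_union, Finset.mem_inter, hS, hT, and_self, true_or, if_true]
    norm_num
  · have hU : v ∈ S ∪ T := Finset.mem_union.2 (Or.inl hS)
    have hI : v ∉ S ∩ T := by simp [Finset.mem_inter, hT]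
    simp only [hS, hT, hU, hI, if_true, if_false]
    rw [glauberPField_eq_sigm, glauberPField_eq_sigm]
    refine ⟨sigm_le_one β h _, sigm_mono β h hβ hmono_b, by
      have := sigm_mono β h hβ hmono_b; linarith⟩
  · have hU : v ∈ S ∪ T := Finset.mem_union.2 (Or.inr hT)
    have hI : v ∉ S ∩ T := by simp [Finset.mem_inter, hS]
    simp only [hS, hT, hU, hI, if_true, if_false]
    rw [glauberPField_eq_sigm, glauberPField_eq_sigm]
    refine ⟨sigm_mono β h hβ hmono_a, sigm_le_one β h _, by
      have := sigm_mono β h hβ hmono_a; linarith⟩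
  · have hU : v ∉ S ∪ T := by simp [Finset.mem_union, hS, hT]
    have hI : v ∉ S ∩ T := by simp [Finset.mem_inter, hS]
    simp only [hS, hT, hU, hI, if_false]
    rw [glauberPField_eq_sigm, glauberPField_eq_sigm, glauberPField_eq_sigm,
      glauberPField_eq_sigm]
    exact ⟨sigm_mono β h hβ hmono_a, sigm_mono β h hβ hmono_b,
      sigm_key β h hβ _ _ _ _ hfield hmono_a hmono_b hsum⟩

def qq (x : Quad V) (v : V) : ℝ :=
  min (min (pA G β h S x v) (pB G β h T x v))
    (pA G β h S x v + pB G β h T x v - pC G β h S T x v)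

def rr (x : Quad V) (v : V) : ℝ :=
  pC G β h S T x v / (pA G β h S x v + pB G β h T x v - qq G β h S T x v)

lemma q_facts (hβ : 0 < β) (hh : ∀ v : V, (G.degree v : ℝ) ≤ h)
    (x : Quad V) (hx : Inv x) (v : V) :
    pD G β h S T x v ≤ qq G β h S T x v ∧ qq G β h S T x v ≤ pA G β h S x v ∧
      qq G β h S T x v ≤ pB G β h T x v ∧
      qq G β h S T x v ≤ pA G β h S x v + pB G β h T x v - pC G β h S T x v ∧
      pA G β h S x v + pB G β h T x v - 1 ≤ qq G β h S T x v ∧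
      0 < pA G β h S x v + pB G β h T x v - qq G β h S T x v ∧
      0 < pD G β h S T x v ∧ 0 < pC G β h S T x v ∧ pC G β h S T x v ≤ 1 := by
  obtain ⟨h1, h2, h3⟩ := p_ineqs G β h S T hβ hh x hx v
  have ha0 : 0 < pA G β h S x v := pp_pos G β h S x.1 v
  have hb0 : 0 < pB G β h T x v := pp_pos G β h T x.2.1 v
  have hc0 : 0 < pC G β h S T x v := pp_pos G β h (S ∪ T) x.2.2.1 v
  have hd0 : 0 < pD G β h S T x v := pp_pos G β h (S ∩ T) x.2.2.2 v
  have ha1 : pA G β h S x v ≤ 1 := pp_le_one G β h S x.1 v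
  have hb1 : pB G β h T x v ≤ 1 := pp_le_one G β h T x.2.1 v
  have hc1 : pC G β h S T x v ≤ 1 := pp_le_one G β h (S ∪ T) x.2.2.1 v
  refine ⟨le_min (le_min h1 h2) (by linarith), ?_, ?_, ?_, ?_, ?_, hd0, hc0, hc1⟩
  · exact le_trans (min_le_left _ _) (min_le_left _ _)
  · exact le_trans (min_le_left _ _) (min_le_right _ _)
  · exact min_le_right _ _
  · exact le_min (le_min (by linarith) (by linarith)) (by linarith)
  · have hqb : qq G β h S T x v ≤ pB G β h T x v :=
      le_trans (min_le_left _ _) (min_le_right _ _)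
    linarith

def mu (x : Quad V) (v : V) (s t u w : Bool) : ℝ :=
  (if s then
     (if t then (if w then pD G β h S T x v else qq G β h S T x v - pD G β h S T x v)
      else (if w then 0 else pA G β h S x v - qq G β h S T x v))
   else
     (if t then (if w then 0 else pB G β h T x v - qq G β h S T x v)
      else (if w then 0 else 1 - pA G β h S x v - pB G β h T x v + qq G β h S T x v))) *
  (if u then (if s || t then rr G β h S T x v else 0)
   else (if s || t then 1 - rr G β h S T x v else 1))

lemma mu_nonneg (hβ : 0 < β) (hh : ∀ v : V, (G.degree v : ℝ) ≤ h)
    (x : Quad V) (hx : Inv x) (v : V) (s t u w : Bool) :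
    0 ≤ mu G β h S T x v s t u w := by
  obtain ⟨hq1, hq2, hq3, hq4, hq5, hP, hd0, hc0, hc1⟩ := q_facts G β h S T hβ hh x hx v
  have hr0 : 0 ≤ rr G β h S T x v := div_nonneg hc0.le hP.le
  have hr1 : rr G β h S T x v ≤ 1 := by
    rw [rr, div_le_one hP]; linarith
  apply mul_nonneg
  · cases s <;> cases t <;> cases w <;> simp <;> linarith
  · cases s <;> cases t <;> cases u <;> simp <;> linarith

def updQ (x : Quad V) (v : V) (s t u w : Bool) : Quad V :=
  (Function.update x.1 v s, Function.update x.2.1 v t,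
   Function.update x.2.2.1 v u, Function.update x.2.2.2 v w)

@[simp] lemma updQ_1 (x : Quad V) (v : V) (s t u w : Bool) :
    (updQ x v s t u w).1 = Function.update x.1 v s := rfl
@[simp] lemma updQ_2 (x : Quad V) (v : V) (s t u w : Bool) :
    (updQ x v s t u w).2.1 = Function.update x.2.1 v t := rfl
@[simp] lemma updQ_3 (x : Quad V) (v : V) (s t u w : Bool) :
    (updQ x v s t u w).2.2.1 = Function.update x.2.2.1 v u := rfl
@[simp] lemma updQ_4 (x : Quad V) (v : V) (s t u w : Bool) :
    (updQ x v s t u w).2.2.2 = Function.update x.2.2.2 v w := rfl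

lemma mu_support (x : Quad V) (hx : Inv x) (v : V) (s t u w : Bool)
    (hmu : mu G β h S T x v s t u w ≠ 0) : Inv (updQ x v s t u w) := by
  have hw : w = true → s = true ∧ t = true := by
    intro hw; subst hw
    cases s <;> cases t <;> simp_all [mu]
  have hu : u = true → s = true ∨ t = true := by
    intro hu; subst hu
    cases s <;> cases t <;> simp_all [mu]
  intro u'
  by_cases hu' : u' = v
  · subst hu'
    simp only [updQ_1, updQ_2, updQ_3, updQ_4, Function.update_self]
    exact ⟨hw, hu⟩
  · simp only [updQ_1, updQ_2, updQ_3, updQ_4, Function.update_of_ne hu']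
    exact hx u'

def QK (x x' : Quad V) : ℝ :=
  (Fintype.card V : ℝ)⁻¹ * ∑ v : V, ∑ s : Bool, ∑ t : Bool, ∑ u : Bool, ∑ w : Bool,
    if x' = updQ x v s t u w then mu G β h S T x v s t u w else 0

lemma QK_nonneg (hβ : 0 < β) (hh : ∀ v : V, (G.degree v : ℝ) ≤ h)
    (x : Quad V) (hx : Inv x) (x' : Quad V) : 0 ≤ QK G β h S T x x' := by
  apply mul_nonneg (by positivity)
  refine Finset.sum_nonneg fun v _ => Finset.sum_nonneg fun s _ => Finset.sum_nonneg
    fun t _ => Finset.sum_nonneg fun u _ => Finset.sum_nonneg fun w _ => ?_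
  split
  · exact mu_nonneg G β h S T hβ hh x hx v s t u w
  · exact le_refl 0

lemma QK_support (x : Quad V) (hx : Inv x) (x' : Quad V) (hx' : ¬ Inv x') :
    QK G β h S T x x' = 0 := by
  rw [QK]
  convert mul_zero _
  refine Finset.sum_eq_zero fun v _ => Finset.sum_eq_zero fun s _ => Finset.sum_eq_zero
    fun t _ => Finset.sum_eq_zero fun u _ => Finset.sum_eq_zero fun w _ => ?_
  split
  · rename_i heq
    by_contra hmu
    exact hx' (heq ▸ mu_support G β h S T x hx v s t u w hmu)
  · rfl

lemma M_A (x : Quad V) (f : (V → Bool) → ℝ) :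
    ∑ x' : Quad V, QK G β h S T x x' * f x'.1
      = ∑ σ' : V → Bool, pinnedKField G β h S x.1 σ' * f σ' := by
  unfold QK pinnedKField
  simp only [mul_assoc, ← Finset.mul_sum]
  congr 1
  simp only [Finset.sum_mul]
  rw [Finset.sum_comm]
  conv_rhs => rw [Finset.sum_comm]
  refine Finset.sum_congr rfl fun v _ => ?_
  by_cases hS : v ∈ S
  · simp only [hS, if_true, Fintype.sum_bool, add_mul, ite_mul, zero_mul, one_mul,
      Finset.sum_add_distrib, Finset.sum_ite_eq', Finset.mem_univ, if_true,
      Bool.or_true, Bool.true_or, Bool.or_false, Bool.false_or, Bool.false_eq_true, if_true, if_false,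
      updQ_1, updQ_2, updQ_3, updQ_4, mu, pA, pp, hS]
    ring
  · simp only [hS, if_false, Fintype.sum_bool, add_mul, ite_mul, zero_mul, one_mul,
      Finset.sum_add_distrib, Finset.sum_ite_eq', Finset.mem_univ, if_true,
      Bool.or_true, Bool.true_or, Bool.or_false, Bool.false_or, Bool.false_eq_true, if_true, if_false,
      updQ_1, updQ_2, updQ_3, updQ_4, mu, pA, pp]
    ring

lemma M_B (x : Quad V) (f : (V → Bool) → ℝ) :
    ∑ x' : Quad V, QK G β h S T x x' * f x'.2.1
      = ∑ σ' : V → Bool, pinnedKField G β h T x.2.1 σ' * f σ' := by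
  unfold QK pinnedKField
  simp only [mul_assoc, ← Finset.mul_sum]
  congr 1
  simp only [Finset.sum_mul]
  rw [Finset.sum_comm]
  conv_rhs => rw [Finset.sum_comm]
  refine Finset.sum_congr rfl fun v _ => ?_
  by_cases hT : v ∈ T
  · simp only [hT, if_true, Fintype.sum_bool, add_mul, ite_mul, zero_mul, one_mul,
      Finset.sum_add_distrib, Finset.sum_ite_eq', Finset.mem_univ, if_true,
      Bool.or_true, Bool.true_or, Bool.or_false, Bool.false_or, Bool.false_eq_true, if_true, if_false,
      updQ_1, updQ_2, updQ_3, updQ_4, mu, pB, pp, hT]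
    ring
  · simp only [hT, if_false, Fintype.sum_bool, add_mul, ite_mul, zero_mul, one_mul,
      Finset.sum_add_distrib, Finset.sum_ite_eq', Finset.mem_univ, if_true,
      Bool.or_true, Bool.true_or, Bool.or_false, Bool.false_or, Bool.false_eq_true, if_true, if_false,
      updQ_1, updQ_2, updQ_3, updQ_4, mu, pB, pp]
    ring

lemma M_D (x : Quad V) (f : (V → Bool) → ℝ) :
    ∑ x' : Quad V, QK G β h S T x x' * f x'.2.2.2
      = ∑ σ' : V → Bool, pinnedKField G β h (S ∩ T) x.2.2.2 σ' * f σ' := by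
  unfold QK pinnedKField
  simp only [mul_assoc, ← Finset.mul_sum]
  congr 1
  simp only [Finset.sum_mul]
  rw [Finset.sum_comm]
  conv_rhs => rw [Finset.sum_comm]
  refine Finset.sum_congr rfl fun v _ => ?_
  by_cases hI : v ∈ S ∩ T
  · simp only [hI, if_true, Fintype.sum_bool, add_mul, ite_mul, zero_mul, one_mul,
      Finset.sum_add_distrib, Finset.sum_ite_eq', Finset.mem_univ, if_true,
      Bool.or_true, Bool.true_or, Bool.or_false, Bool.false_or, Bool.false_eq_true, if_true, if_false,
      updQ_1, updQ_2, updQ_3, updQ_4, mu, pD, pp, hI]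
    ring
  · simp only [hI, if_false, Fintype.sum_bool, add_mul, ite_mul, zero_mul, one_mul,
      Finset.sum_add_distrib, Finset.sum_ite_eq', Finset.mem_univ, if_true,
      Bool.or_true, Bool.true_or, Bool.or_false, Bool.false_or, Bool.false_eq_true, if_true, if_false,
      updQ_1, updQ_2, updQ_3, updQ_4, mu, pD, pp]
    ring

lemma M_C (hβ : 0 < β) (hh : ∀ v : V, (G.degree v : ℝ) ≤ h)
    (x : Quad V) (hx : Inv x) (f : (V → Bool) → ℝ) :
    ∑ x' : Quad V, QK G β h S T x x' * f x'.2.2.1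
      = ∑ σ' : V → Bool, pinnedKField G β h (S ∪ T) x.2.2.1 σ' * f σ' := by
  unfold QK pinnedKField
  simp only [mul_assoc, ← Finset.mul_sum]
  congr 1
  simp only [Finset.sum_mul]
  rw [Finset.sum_comm]
  conv_rhs => rw [Finset.sum_comm]
  refine Finset.sum_congr rfl fun v _ => ?_
  obtain ⟨hq1, hq2, hq3, hq4, hq5, hP, hd0, hc0, hc1⟩ := q_facts G β h S T hβ hh x hx v
  have hr : rr G β h S T x v * (pA G β h S x v + pB G β h T x v - qq G β h S T x v)
      = pC G β h S T x v := div_mul_cancel₀ _ (ne_of_gt hP)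
  by_cases hU : v ∈ S ∪ T
  · have hpc : pC G β h S T x v = 1 := by simp [pC, pp, hU]
    simp only [hU, if_true, Fintype.sum_bool, add_mul, ite_mul, zero_mul, one_mul,
      Finset.sum_add_distrib, Finset.sum_ite_eq', Finset.mem_univ, if_true,
      Bool.or_true, Bool.true_or, Bool.or_false, Bool.false_or, Bool.false_eq_true, if_true, if_false,
      updQ_1, updQ_2, updQ_3, updQ_4, mu]
    linear_combination (f (Function.update x.2.2.1 v true)
        - f (Function.update x.2.2.1 v false)) * hr
      + (f (Function.update x.2.2.1 v true) - f (Function.update x.2.2.1 v false)) * hpc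
  · have hpc : pC G β h S T x v = glauberPField β h G x.2.2.1 v := by simp [pC, pp, hU]
    simp only [hU, if_false, Fintype.sum_bool, add_mul, ite_mul, zero_mul, one_mul,
      Finset.sum_add_distrib, Finset.sum_ite_eq', Finset.mem_univ, if_true,
      Bool.or_true, Bool.true_or, Bool.or_false, Bool.false_or, Bool.false_eq_true, if_true, if_false,
      updQ_1, updQ_2, updQ_3, updQ_4, mu]
    linear_combination (f (Function.update x.2.2.1 v true)
        - f (Function.update x.2.2.1 v false)) * hr
      + (f (Function.update x.2.2.1 v true) - f (Function.update x.2.2.1 v false)) * hpc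

def initQ (σ₀ : V → Bool) : Quad V :=
  (pinInit S σ₀, pinInit T σ₀, pinInit (S ∪ T) σ₀, pinInit (S ∩ T) σ₀)

lemma initQ_Inv (σ₀ : V → Bool) : Inv (initQ S T σ₀) := by
  intro v
  simp only [initQ, pinInit, Finset.mem_union, Finset.mem_inter]
  by_cases hS : v ∈ S <;> by_cases hT : v ∈ T <;> simp [hS, hT]

def evQ (σ₀ : V → Bool) : ℕ → Quad V → ℝ
  | 0 => fun x => if x = initQ S T σ₀ then 1 else 0
  | t+1 => fun x' => ∑ x : Quad V, evQ σ₀ t x * QK G β h S T x x'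

lemma evQ_props (hβ : 0 < β) (hh : ∀ v : V, (G.degree v : ℝ) ≤ h) (σ₀ : V → Bool) :
    ∀ t : ℕ, (∀ x : Quad V, ¬ Inv x → evQ G β h S T σ₀ t x = 0) ∧
      (∀ x : Quad V, 0 ≤ evQ G β h S T σ₀ t x) := by
  intro t
  induction t with
  | zero =>
    constructor
    · intro x hx
      simp only [evQ]
      have : x ≠ initQ S T σ₀ := fun he => hx (he ▸ initQ_Inv S T σ₀)
      simp [this]
    · intro x
      simp only [evQ]
      split <;> norm_num
  | succ t ih =>
    constructor
    · intro x' hx'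
      simp only [evQ]
      refine Finset.sum_eq_zero fun x _ => ?_
      by_cases hI : Inv x
      · rw [QK_support G β h S T x hI x' hx', mul_zero]
      · rw [ih.1 x hI, zero_mul]
    · intro x'
      simp only [evQ]
      refine Finset.sum_nonneg fun x _ => ?_
      by_cases hI : Inv x
      · exact mul_nonneg (ih.2 x) (QK_nonneg G β h S T hβ hh x hI x')
      · rw [ih.1 x hI, zero_mul]

lemma reshuffle {α : Type*} [Fintype α] (ρ : α → ℝ) (K : α → α → ℝ) (f : α → ℝ) :
    ∑ y : α, (∑ x : α, ρ x * K x y) * f y = ∑ x : α, ρ x * ∑ y : α, K x y * f y := by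
  have h1 : ∀ y : α, (∑ x : α, ρ x * K x y) * f y = ∑ x : α, ρ x * (K x y * f y) := by
    intro y
    rw [Finset.sum_mul]
    exact Finset.sum_congr rfl fun x _ => by ring
  rw [Finset.sum_congr rfl fun y _ => h1 y, Finset.sum_comm]
  exact Finset.sum_congr rfl fun x _ => by rw [Finset.mul_sum]

lemma evA (hβ : 0 < β) (hh : ∀ v : V, (G.degree v : ℝ) ≤ h) (σ₀ : V → Bool) :
    ∀ (t : ℕ) (f : (V → Bool) → ℝ),
    ∑ x : Quad V, evQ G β h S T σ₀ t x * f x.1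
      = ∑ σ : V → Bool, evolve (pinnedKField G β h S) t (delta (pinInit S σ₀)) σ * f σ := by
  intro t
  induction t with
  | zero =>
    intro f
    simp only [evQ, evolve, delta, ite_mul, zero_mul, one_mul, Finset.sum_ite_eq',
      Finset.mem_univ, if_true]
    rfl
  | succ t ih =>
    intro f
    simp only [evQ, evolve]
    rw [show (∑ x' : Quad V, (∑ x : Quad V, evQ G β h S T σ₀ t x * QK G β h S T x x')
          * f x'.1)
        = ∑ x' : Quad V, (∑ x : Quad V, evQ G β h S T σ₀ t x * QK G β h S T x x')
          * (fun y : Quad V => f y.1) x' from rfl,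
      reshuffle, reshuffle]
    have hcongr : ∀ x : Quad V, evQ G β h S T σ₀ t x *
        (∑ x' : Quad V, QK G β h S T x x' * (fun y : Quad V => f y.1) x')
        = evQ G β h S T σ₀ t x * (∑ σ' : V → Bool, pinnedKField G β h S x.1 σ' * f σ') := by
      intro x
      by_cases hI : Inv x
      · rw [M_A G β h S T x f]
      · rw [(evQ_props G β h S T hβ hh σ₀ t).1 x hI, zero_mul, zero_mul]
    rw [Finset.sum_congr rfl fun x _ => hcongr x,
      ih (fun σ => ∑ σ' : V → Bool, pinnedKField G β h S σ σ' * f σ')]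

lemma evB (hβ : 0 < β) (hh : ∀ v : V, (G.degree v : ℝ) ≤ h) (σ₀ : V → Bool) :
    ∀ (t : ℕ) (f : (V → Bool) → ℝ),
    ∑ x : Quad V, evQ G β h S T σ₀ t x * f x.2.1
      = ∑ σ : V → Bool, evolve (pinnedKField G β h T) t (delta (pinInit T σ₀)) σ * f σ := by
  intro t
  induction t with
  | zero =>
    intro f
    simp only [evQ, evolve, delta, ite_mul, zero_mul, one_mul, Finset.sum_ite_eq',
      Finset.mem_univ, if_true]
    rfl
  | succ t ih =>
    intro f
    simp only [evQ, evolve]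
    rw [show (∑ x' : Quad V, (∑ x : Quad V, evQ G β h S T σ₀ t x * QK G β h S T x x')
          * f x'.2.1)
        = ∑ x' : Quad V, (∑ x : Quad V, evQ G β h S T σ₀ t x * QK G β h S T x x')
          * (fun y : Quad V => f y.2.1) x' from rfl,
      reshuffle, reshuffle]
    have hcongr : ∀ x : Quad V, evQ G β h S T σ₀ t x *
        (∑ x' : Quad V, QK G β h S T x x' * (fun y : Quad V => f y.2.1) x')
        = evQ G β h S T σ₀ t x * (∑ σ' : V → Bool, pinnedKField G β h T x.2.1 σ' * f σ') := by
      intro x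
      by_cases hI : Inv x
      · rw [M_B G β h S T x f]
      · rw [(evQ_props G β h S T hβ hh σ₀ t).1 x hI, zero_mul, zero_mul]
    rw [Finset.sum_congr rfl fun x _ => hcongr x,
      ih (fun σ => ∑ σ' : V → Bool, pinnedKField G β h T σ σ' * f σ')]
lemma evC (hβ : 0 < β) (hh : ∀ v : V, (G.degree v : ℝ) ≤ h) (σ₀ : V → Bool) :
    ∀ (t : ℕ) (f : (V → Bool) → ℝ),
    ∑ x : Quad V, evQ G β h S T σ₀ t x * f x.2.2.1
      = ∑ σ : V → Bool, evolve (pinnedKField G β h (S ∪ T)) t (delta (pinInit (S ∪ T) σ₀)) σ * f σ := by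
  intro t
  induction t with
  | zero =>
    intro f
    simp only [evQ, evolve, delta, ite_mul, zero_mul, one_mul, Finset.sum_ite_eq',
      Finset.mem_univ, if_true]
    rfl
  | succ t ih =>
    intro f
    simp only [evQ, evolve]
    rw [show (∑ x' : Quad V, (∑ x : Quad V, evQ G β h S T σ₀ t x * QK G β h S T x x')
          * f x'.2.2.1)
        = ∑ x' : Quad V, (∑ x : Quad V, evQ G β h S T σ₀ t x * QK G β h S T x x')
          * (fun y : Quad V => f y.2.2.1) x' from rfl,
      reshuffle, reshuffle]
    have hcongr : ∀ x : Quad V, evQ G β h S T σ₀ t x *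
        (∑ x' : Quad V, QK G β h S T x x' * (fun y : Quad V => f y.2.2.1) x')
        = evQ G β h S T σ₀ t x * (∑ σ' : V → Bool, pinnedKField G β h (S ∪ T) x.2.2.1 σ' * f σ') := by
      intro x
      by_cases hI : Inv x
      · rw [M_C G β h S T hβ hh x hI f]
      · rw [(evQ_props G β h S T hβ hh σ₀ t).1 x hI, zero_mul, zero_mul]
    rw [Finset.sum_congr rfl fun x _ => hcongr x,
      ih (fun σ => ∑ σ' : V → Bool, pinnedKField G β h (S ∪ T) σ σ' * f σ')]
lemma evD (hβ : 0 < β) (hh : ∀ v : V, (G.degree v : ℝ) ≤ h) (σ₀ : V → Bool) :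
    ∀ (t : ℕ) (f : (V → Bool) → ℝ),
    ∑ x : Quad V, evQ G β h S T σ₀ t x * f x.2.2.2
      = ∑ σ : V → Bool, evolve (pinnedKField G β h (S ∩ T)) t (delta (pinInit (S ∩ T) σ₀)) σ * f σ := by
  intro t
  induction t with
  | zero =>
    intro f
    simp only [evQ, evolve, delta, ite_mul, zero_mul, one_mul, Finset.sum_ite_eq',
      Finset.mem_univ, if_true]
    rfl
  | succ t ih =>
    intro f
    simp only [evQ, evolve]
    rw [show (∑ x' : Quad V, (∑ x : Quad V, evQ G β h S T σ₀ t x * QK G β h S T x x')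
          * f x'.2.2.2)
        = ∑ x' : Quad V, (∑ x : Quad V, evQ G β h S T σ₀ t x * QK G β h S T x x')
          * (fun y : Quad V => f y.2.2.2) x' from rfl,
      reshuffle, reshuffle]
    have hcongr : ∀ x : Quad V, evQ G β h S T σ₀ t x *
        (∑ x' : Quad V, QK G β h S T x x' * (fun y : Quad V => f y.2.2.2) x')
        = evQ G β h S T σ₀ t x * (∑ σ' : V → Bool, pinnedKField G β h (S ∩ T) x.2.2.2 σ' * f σ') := by
      intro x
      by_cases hI : Inv x
      · rw [M_D G β h S T x f]
      · rw [(evQ_props G β h S T hβ hh σ₀ t).1 x hI, zero_mul, zero_mul]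
    rw [Finset.sum_congr rfl fun x _ => hcongr x,
      ih (fun σ => ∑ σ' : V → Bool, pinnedKField G β h (S ∩ T) σ σ' * f σ')]

def cnt (σ : V → Bool) : ℝ := ((Finset.univ.filter (fun v => σ v = true)).card : ℝ)

lemma cnt_eq (σ : V → Bool) : cnt σ = ∑ v : V, if σ v = true then (1:ℝ) else 0 := by
  rw [cnt, Finset.card_filter]
  push_cast
  rfl

lemma cnt_submod (x : Quad V) (hx : Inv x) :
    cnt x.2.2.1 + cnt x.2.2.2 ≤ cnt x.1 + cnt x.2.1 := by
  rw [cnt_eq, cnt_eq, cnt_eq, cnt_eq, ← Finset.sum_add_distrib, ← Finset.sum_add_distrib]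
  refine Finset.sum_le_sum fun v _ => ?_
  rcases hx v with ⟨h1, h2⟩
  cases ha : x.1 v <;> cases hb : x.2.1 v <;> cases hc : x.2.2.1 v <;>
    cases hd : x.2.2.2 v <;> simp_all <;> norm_num

end DS

/-- **Dynamic submodularity under a strong external field.** If the external field `h`
is at least the maximum degree of `G`, then for every time `t` the expected number of
`+1` spins of the `S`-corrupted Glauber dynamics (pinned to `+1`, started from `σ₀`
with `S` set to `+1`) is a submodular function of `S`. -/
theorem dynamic_submodular (G : SimpleGraph V) (β h : ℝ) (hβ : 0 < β)
    (hh : ∀ v : V, (G.degree v : ℝ) ≤ h)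
    (σ₀ : V → Bool) (t : ℕ) (S T : Finset V) :
    expPlus (evolve (pinnedKField G β h (S ∪ T)) t (delta (pinInit (S ∪ T) σ₀)))
      + expPlus (evolve (pinnedKField G β h (S ∩ T)) t (delta (pinInit (S ∩ T) σ₀)))
    ≤ expPlus (evolve (pinnedKField G β h S) t (delta (pinInit S σ₀)))
      + expPlus (evolve (pinnedKField G β h T) t (delta (pinInit T σ₀))) := by
  classical
  have e1 : expPlus (evolve (pinnedKField G β h S) t (delta (pinInit S σ₀)))
      = ∑ x : DS.Quad V, DS.evQ G β h S T σ₀ t x * DS.cnt x.1 :=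
    (DS.evA G β h S T hβ hh σ₀ t DS.cnt).symm
  have e2 : expPlus (evolve (pinnedKField G β h T) t (delta (pinInit T σ₀)))
      = ∑ x : DS.Quad V, DS.evQ G β h S T σ₀ t x * DS.cnt x.2.1 :=
    (DS.evB G β h S T hβ hh σ₀ t DS.cnt).symm
  have e3 : expPlus (evolve (pinnedKField G β h (S ∪ T)) t (delta (pinInit (S ∪ T) σ₀)))
      = ∑ x : DS.Quad V, DS.evQ G β h S T σ₀ t x * DS.cnt x.2.2.1 :=
    (DS.evC G β h S T hβ hh σ₀ t DS.cnt).symm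
  have e4 : expPlus (evolve (pinnedKField G β h (S ∩ T)) t (delta (pinInit (S ∩ T) σ₀)))
      = ∑ x : DS.Quad V, DS.evQ G β h S T σ₀ t x * DS.cnt x.2.2.2 :=
    (DS.evD G β h S T hβ hh σ₀ t DS.cnt).symm
  rw [e1, e2, e3, e4, ← Finset.sum_add_distrib, ← Finset.sum_add_distrib]
  refine Finset.sum_le_sum fun x _ => ?_
  by_cases hI : DS.Inv x
  · rw [← mul_add, ← mul_add]
    exact mul_le_mul_of_nonneg_left (DS.cnt_submod x hI)
      ((DS.evQ_props G β h S T hβ hh σ₀ t).2 x)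
  · rw [(DS.evQ_props G β h S T hβ hh σ₀ t).1 x hI]
    simp

end
end
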